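/- Let μ_b, μ_s ≥ 0, κ_b, β_b > 0, δ_s ≥ 0, M_{b,0} ≥ 0 and δ₀ ∈ (0,1], and let c : [0,∞) → ℝ be continuous and nonnegative. Suppose φ, y, s : [0,∞) → ℝ are differentiable and satisfy, for all t ≥ 0, φ'(t) = −(1−s(t)) μ_b φ(t) y(t) − (1−s(t)) μ_s φ(t) c(t), y'(t) = κ_b·(φ(t)/(1+φ(t)))·(1−φ(t)) − ((1−s(t)) μ_b φ(t) + β_b)·y(t), and s'(t) = −δ_s y(t) s(t), with initial data δ₀ ≤ φ(0) ≤ 1, 0 ≤ y(0) ≤ M_{b,0}, and 0 ≤ s(0) ≤ 1. Then for all t ≥ 0: 0 < φ(t) ≤ 1, 0 ≤ y(t) ≤ max{M_{b,0}, κ_b/β_b}, and 0 ≤ s(t) ≤ 1. -/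

import Mathlib

open Set Filter Topology

private lemma deriv_pos_exit {g : ℝ → ℝ} {τ d : ℝ} (hτ : 0 < τ)
    (hd : HasDerivAt g d τ) (hdpos : 0 < d)
    (hg : ∀ u, 0 ≤ u → u < τ → 0 < g u) (hgτ : g τ = 0) : False := by
  have hslope := hasDerivAt_iff_tendsto_slope.mp hd
  have h1 : ∀ᶠ u in 𝓝[<] τ, 0 < slope g τ u :=
    (hslope.mono_left (nhdsWithin_mono τ fun x hx => ne_of_lt hx)).eventually
      (eventually_gt_nhds hdpos)
  have h2 : ∀ᶠ u in 𝓝[<] τ, 0 < u :=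
    eventually_nhdsWithin_of_eventually_nhds (eventually_gt_nhds hτ)
  have h3 : ∀ᶠ u in 𝓝[<] τ, u < τ :=
    eventually_mem_nhdsWithin.mono fun x hx => hx
  obtain ⟨u, hu1, hu2, hu3⟩ := (h1.and (h2.and h3)).exists
  have hgu := hg u hu2.le hu3
  have hsl : slope g τ u = g u / (u - τ) := by
    rw [slope_def_field, hgτ, sub_zero]
  have : slope g τ u < 0 := by
    rw [hsl]; exact div_neg_of_pos_of_neg hgu (by linarith)
  linarith

private lemma left_nonneg {f : ℝ → ℝ} {τ : ℝ} (hτ : 0 < τ) (hf : ContinuousAt f τ)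
    (h : ∀ u, 0 ≤ u → u < τ → 0 ≤ f u) : 0 ≤ f τ := by
  have htd : Filter.Tendsto f (𝓝[<] τ) (𝓝 (f τ)) := hf.continuousWithinAt.tendsto
  refine ge_of_tendsto htd ?_
  have h2 : ∀ᶠ u in 𝓝[<] τ, 0 < u :=
    eventually_nhdsWithin_of_eventually_nhds (eventually_gt_nhds hτ)
  have h3 : ∀ᶠ u in 𝓝[<] τ, u < τ :=
    eventually_mem_nhdsWithin.mono fun x hx => hx
  filter_upwards [h2, h3] with u hu2 hu3
  exact h u hu2.le hu3

private lemma ev_lt {f g : ℝ → ℝ} {s : Set ℝ} {x : ℝ} (hf : ContinuousWithinAt f s x)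
    (hg : ContinuousWithinAt g s x) (h : f x < g x) : ∀ᶠ v in 𝓝[s] x, f v < g v := by
  have ht : ContinuousWithinAt (fun v => g v - f v) s x := hg.sub hf
  have := ht.eventually (eventually_gt_nhds (sub_pos.mpr h))
  exact this.mono fun v hv => by simpa [sub_pos] using hv

private lemma lim_le {x b L e₀ : ℝ} (hL : 0 < L) (he₀ : 0 < e₀)
    (h : ∀ ε, 0 < ε → ε ≤ e₀ → x < b + ε * L) : x ≤ b := by
  by_contra hc
  push_neg at hc
  have hq : 0 < (x - b) / (2 * L) := div_pos (by linarith) (by linarith)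
  have h1 := h (min e₀ ((x - b) / (2 * L))) (lt_min he₀ hq) (min_le_left _ _)
  have h2 : min e₀ ((x - b) / (2 * L)) * L ≤ ((x - b) / (2 * L)) * L :=
    mul_le_mul_of_nonneg_right (min_le_right _ _) hL.le
  have h3 : ((x - b) / (2 * L)) * L = (x - b) / 2 := by field_simp
  linarith


private lemma contact_phi_upper (μb μs M' C Λ e a yτ cτ φτ : ℝ)
    (hμb : 0 ≤ μb) (hμs : 0 ≤ μs) (hM0 : 0 ≤ M') (hCnn : 0 ≤ C)
    (he0 : 0 < e) (he1 : e ≤ 1)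
    (ha1 : -a ≤ e) (ha2 : a ≤ 1 + e)
    (hyl : -e ≤ yτ) (hyu : yτ ≤ M' + e)
    (hc0 : 0 ≤ cτ) (hcC : cτ ≤ C)
    (hφpos : 0 < φτ) (hφ2 : φτ ≤ 2)
    (hgap : 2*(μb*(M'+4)) + 2*(μs*C) + 1 ≤ Λ) :
    0 < e * Λ - (-(a * μb * φτ * yτ) - a * μs * φτ * cτ) := by
  have t1 : -(a * yτ) ≤ (M' + 4) * e := by
    nlinarith [mul_nonneg (by linarith : (0:ℝ) ≤ e + a) (by linarith : (0:ℝ) ≤ yτ + e),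
      mul_le_mul_of_nonneg_left hyu he0.le,
      mul_le_mul_of_nonneg_right ha2 he0.le,
      mul_le_mul_of_nonneg_left he1 he0.le]
  have t2 : -(a * cτ) ≤ C * e := by
    nlinarith [mul_le_mul_of_nonneg_right ha1 hc0,
      mul_le_mul_of_nonneg_left hcC he0.le]
  have t3 : μb * -(a * yτ) ≤ μb * ((M' + 4) * e) := mul_le_mul_of_nonneg_left t1 hμb
  have t4 : μs * -(a * cτ) ≤ μs * (C * e) := mul_le_mul_of_nonneg_left t2 hμs
  have p1 : φτ * (μb * -(a * yτ)) ≤ φτ * (μb * ((M' + 4) * e)) :=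
    mul_le_mul_of_nonneg_left t3 hφpos.le
  have p2 : φτ * (μb * ((M' + 4) * e)) ≤ 2 * (μb * ((M' + 4) * e)) :=
    mul_le_mul_of_nonneg_right hφ2 (mul_nonneg hμb (mul_nonneg (by linarith) he0.le))
  have p3 : φτ * (μs * -(a * cτ)) ≤ φτ * (μs * (C * e)) :=
    mul_le_mul_of_nonneg_left t4 hφpos.le
  have p4 : φτ * (μs * (C * e)) ≤ 2 * (μs * (C * e)) :=
    mul_le_mul_of_nonneg_right hφ2 (mul_nonneg hμs (mul_nonneg hCnn he0.le))
  have hgapE : (2*(μb*(M'+4)) + 2*(μs*C) + 1) * e ≤ Λ * e :=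
    mul_le_mul_of_nonneg_right hgap he0.le
  nlinarith [p1, p2, p3, p4, hgapE, he0]

private lemma contact_phi_lower (μb μs M' C Λ e a yτ cτ φτ : ℝ)
    (hμb : 0 ≤ μb) (hμs : 0 ≤ μs) (hM0 : 0 ≤ M') (hCnn : 0 ≤ C)
    (he0 : 0 < e) (he1 : e ≤ 1)
    (ha1 : -a ≤ e) (ha2 : a ≤ 1 + e)
    (hyl : -e ≤ yτ) (hyu : yτ ≤ M' + e)
    (hc0 : 0 ≤ cτ) (hcC : cτ ≤ C)
    (hφpos : 0 < φτ)
    (hgap : 2*(μb*(M'+1)) + 2*(μs*C) + 3*μb < Λ) :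
    0 < -(a * μb * φτ * yτ) - a * μs * φτ * cτ - -(φτ * Λ) := by
  have haG : a * (μb * yτ + μs * cτ) < Λ := by
    have g1 : μb * yτ ≤ μb * (M' + 1) := mul_le_mul_of_nonneg_left (by linarith) hμb
    have g2 : μs * cτ ≤ μs * C := mul_le_mul_of_nonneg_left hcC hμs
    have g3 : μb * (-1) ≤ μb * yτ := mul_le_mul_of_nonneg_left (by linarith) hμb
    have g4 : 0 ≤ μs * cτ := mul_nonneg hμs hc0
    nlinarith [mul_nonneg (by linarith : (0:ℝ) ≤ 2 - a)
        (by nlinarith : (0:ℝ) ≤ μb * yτ + μs * cτ + μb),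
      mul_le_mul_of_nonneg_right (by linarith : -a ≤ 1) hμb]
  nlinarith [mul_pos (sub_pos.mpr haG) hφpos]

private lemma contact_y_lower (κb μb βb Λ q φτ a e : ℝ)
    (hκb : 0 < κb) (hμb : 0 ≤ μb) (hβb : 0 < βb)
    (he0 : 0 < e) (he1 : e ≤ 1)
    (hq0 : 0 ≤ q) (hq1 : q ≤ 1)
    (hφpos : 0 < φτ) (hφ2 : φτ ≤ 2) (hφu : φτ ≤ 1 + e)
    (ha1 : -a ≤ e) (ha2 : a ≤ 1 + e)
    (hgap : κb + 2*μb < Λ) :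
    0 < κb * q * (1 - φτ) - (a * μb * φτ + βb) * -e + e * Λ := by
  have w1 : -e ≤ q * (1 - φτ) := by
    nlinarith [mul_nonneg hq0 (by linarith : (0:ℝ) ≤ 1 - φτ + e),
      mul_nonneg (by linarith : (0:ℝ) ≤ 1 - q) he0.le]
  have w2 : κb * (-e) ≤ κb * (q * (1 - φτ)) := mul_le_mul_of_nonneg_left w1 hκb.le
  have w3 : -(2*μb) ≤ a * μb * φτ + βb := by
    nlinarith [mul_nonneg (by linarith : (0:ℝ) ≤ a + 1) (mul_nonneg hμb hφpos.le),
      mul_le_mul_of_nonneg_left hφ2 hμb, hβb.le]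
  have w4 : (-(2*μb)) * e ≤ (a * μb * φτ + βb) * e := mul_le_mul_of_nonneg_right w3 he0.le
  nlinarith [w2, w4, mul_lt_mul_of_pos_right hgap he0]

private lemma contact_y_upper (κb μb βb M' Λ q φτ a e : ℝ)
    (hκb : 0 < κb) (hμb : 0 ≤ μb) (hβb : 0 < βb) (hM0 : 0 ≤ M')
    (he0 : 0 < e) (he1 : e ≤ 1)
    (hq0 : 0 ≤ q) (hq1 : q ≤ 1)
    (hφpos : 0 < φτ) (hφ2 : φτ ≤ 2)
    (ha1 : -a ≤ e) (ha2 : a ≤ 1 + e)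
    (hM'κ : κb ≤ βb * M')
    (hgap : 2*μb*(M'+1) < Λ) :
    0 < e * Λ - (κb * q * (1 - φτ) - (a * μb * φτ + βb) * (M' + e)) := by
  have w5 : q * (1 - φτ) ≤ 1 := by nlinarith [mul_nonneg hq0 hφpos.le]
  have w5' : κb * (q * (1 - φτ)) ≤ κb := by nlinarith [mul_le_mul_of_nonneg_left w5 hκb.le]
  have w6 : -(a * μb * φτ) ≤ 2*μb*e := by
    nlinarith [mul_le_mul_of_nonneg_right ha1 (mul_nonneg hμb hφpos.le),
      mul_le_mul_of_nonneg_left hφ2 (mul_nonneg hμb he0.le)]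
  have hm1 : (0:ℝ) ≤ M' + e := by linarith
  have hm2 : M' + e ≤ M' + 1 := by linarith
  have hm3 : (0:ℝ) ≤ 2*μb*e := by positivity
  have w7 : (-(a * μb * φτ)) * (M' + e) ≤ (2*μb*e) * (M' + 1) := by
    nlinarith [mul_le_mul_of_nonneg_right w6 hm1, mul_le_mul_of_nonneg_left hm2 hm3]
  nlinarith [w5', w7, hM'κ, mul_lt_mul_of_pos_right hgap he0,
    mul_nonneg hβb.le he0.le]

private lemma contact_s_lower (δs Λ yτ e : ℝ)
    (hδs : 0 ≤ δs) (he0 : 0 < e) (he1 : e ≤ 1)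
    (hyl : -e ≤ yτ) (hgap : δs < Λ) :
    0 < -(δs * yτ * -e) + e * Λ := by
  have w8 : (-1) * (δs * e) ≤ yτ * (δs * e) :=
    mul_le_mul_of_nonneg_right (by linarith) (mul_nonneg hδs he0.le)
  nlinarith [w8, mul_lt_mul_of_pos_right hgap he0]

private lemma contact_s_upper (δs Λ yτ e : ℝ)
    (hδs : 0 ≤ δs) (he0 : 0 < e) (he1 : e ≤ 1)
    (hyl : -e ≤ yτ) (hgap : 2*δs < Λ) :
    0 < e * Λ - -(δs * yτ * (1 + e)) := by
  have w9 : (-e) * (δs * (1 + e)) ≤ yτ * (δs * (1 + e)) :=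
    mul_le_mul_of_nonneg_right hyl (mul_nonneg hδs (by linarith))
  nlinarith [w9, mul_lt_mul_of_pos_right hgap he0, he1, hδs,
    mul_nonneg hδs (mul_nonneg he0.le he0.le)]

private lemma gaps (κb βb δs μb μs M' C Λ : ℝ)
    (hκb : 0 < κb) (hβb : 0 < βb) (hδs : 0 ≤ δs) (hμb : 0 ≤ μb) (hμs : 0 ≤ μs)
    (hM0 : 0 ≤ M') (hCnn : 0 ≤ C)
    (hΛdef : Λ = 1 + κb + βb + 2*δs + 6*μb*(M'+4) + 4*μs*(C+1)) :
    (2*(μb*(M'+4)) + 2*(μs*C) + 1 ≤ Λ) ∧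
    (2*(μb*(M'+1)) + 2*(μs*C) + 3*μb < Λ) ∧
    (κb + 2*μb < Λ) ∧
    (2*μb*(M'+1) < Λ) ∧
    (δs < Λ) ∧
    (2*δs < Λ) ∧ (0 < Λ) := by
  have k1 : 0 ≤ μb * M' := mul_nonneg hμb hM0
  have k2 : 0 ≤ μs * C := mul_nonneg hμs hCnn
  subst hΛdef
  refine ⟨by nlinarith, by nlinarith, by nlinarith, by nlinarith,
    by nlinarith, by nlinarith, by nlinarith⟩

set_option maxHeartbeats 1000000 in
/-- invariant region for the heterogeneous matrix-suitability model:
φ' = −(1−s) μ_b φ y − (1−s) μ_s φ c,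
y' = κ_b·(φ/(1+φ))·(1−φ) − ((1−s) μ_b φ + β_b) y,
s' = −δ_s y s, with c continuous nonnegative and initial data
δ₀ ≤ φ(0) ≤ 1, 0 ≤ y(0) ≤ M_{b,0}, 0 ≤ s(0) ≤ 1. Then for all t ≥ 0 one has
0 < φ(t) ≤ 1, 0 ≤ y(t) ≤ max{M_{b,0}, κ_b/β_b} and 0 ≤ s(t) ≤ 1. -/
theorem heterogeneous_suitability_invariant_region
    (μb μs κb βb δs Mb0 δ₀ : ℝ)
    (hμb : 0 ≤ μb) (hμs : 0 ≤ μs) (hκb : 0 < κb) (hβb : 0 < βb)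
    (hδs : 0 ≤ δs) (hMb0 : 0 ≤ Mb0) (hδ₀ : 0 < δ₀) (hδ₀' : δ₀ ≤ 1)
    (c φ y s : ℝ → ℝ)
    (hc_cont : ContinuousOn c (Set.Ici 0))
    (hc_nonneg : ∀ t ∈ Set.Ici (0 : ℝ), 0 ≤ c t)
    (hφ : ∀ t ∈ Set.Ici (0 : ℝ),
      HasDerivWithinAt φ
        (-((1 - s t) * μb * φ t * y t) - (1 - s t) * μs * φ t * c t) (Set.Ici 0) t)
    (hy : ∀ t ∈ Set.Ici (0 : ℝ),
      HasDerivWithinAt y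
        (κb * (φ t / (1 + φ t)) * (1 - φ t) - ((1 - s t) * μb * φ t + βb) * y t)
        (Set.Ici 0) t)
    (hs : ∀ t ∈ Set.Ici (0 : ℝ),
      HasDerivWithinAt s (-(δs * y t * s t)) (Set.Ici 0) t)
    (hφ0 : δ₀ ≤ φ 0) (hφ0' : φ 0 ≤ 1)
    (hy0 : 0 ≤ y 0) (hy0' : y 0 ≤ Mb0)
    (hs0 : 0 ≤ s 0) (hs0' : s 0 ≤ 1) :
    ∀ t ∈ Set.Ici (0 : ℝ),
      (0 < φ t ∧ φ t ≤ 1) ∧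
      (0 ≤ y t ∧ y t ≤ max Mb0 (κb / βb)) ∧
      (0 ≤ s t ∧ s t ≤ 1) := by
  intro t ht
  have ht0 : (0:ℝ) ≤ t := ht
  obtain ⟨C₀, hC₀⟩ := (isCompact_Icc (a := (0:ℝ)) (b := t)).exists_bound_of_continuousOn
    (hc_cont.mono Icc_subset_Ici_self)
  obtain ⟨M', hM'def⟩ : ∃ x : ℝ, x = max Mb0 (κb / βb) := ⟨_, rfl⟩
  have hMb0M : Mb0 ≤ M' := by rw [hM'def]; exact le_max_left _ _
  have hM0 : 0 ≤ M' := le_trans hMb0 hMb0M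
  have hM'κ : κb ≤ βb * M' := by
    have h1 : κb / βb ≤ M' := by rw [hM'def]; exact le_max_right _ _
    calc κb = βb * (κb / βb) := by field_simp
    _ ≤ βb * M' := mul_le_mul_of_nonneg_left h1 hβb.le
  obtain ⟨C, hCdef⟩ : ∃ x : ℝ, x = max C₀ 0 := ⟨_, rfl⟩
  have hCnn : (0:ℝ) ≤ C := by rw [hCdef]; exact le_max_right _ _
  have hCb : ∀ u ∈ Icc (0:ℝ) t, c u ≤ C := fun u hu => by
    rw [hCdef]
    exact le_trans (le_trans (le_abs_self _)
      (by simpa [Real.norm_eq_abs] using hC₀ u hu)) (le_max_left _ _)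
  obtain ⟨Λ, hΛdef⟩ : ∃ x : ℝ,
      x = 1 + κb + βb + 2*δs + 6*μb*(M'+4) + 4*μs*(C+1) := ⟨_, rfl⟩
  obtain ⟨gap1, gap2, gap3, gap4, gap5, gap6, hΛpos⟩ :=
    gaps κb βb δs μb μs M' C Λ hκb hβb hδs hμb hμs hM0 hCnn hΛdef
  obtain ⟨P, hPdef⟩ : ∃ P : ℝ → ℝ → Prop, ∀ ε u, P ε u ↔
      (φ u < 1 + ε * Real.exp (Λ * u) ∧
       δ₀ * (1 - ε) * Real.exp (-(Λ * u)) < φ u ∧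
       -(ε * Real.exp (Λ * u)) < y u ∧
       y u < M' + ε * Real.exp (Λ * u) ∧
       -(ε * Real.exp (Λ * u)) < s u ∧
       s u < 1 + ε * Real.exp (Λ * u)) := ⟨_, fun _ _ => Iff.rfl⟩
  have key : ∀ ε : ℝ, 0 < ε → ε ≤ Real.exp (-(Λ * t)) → ∀ u ∈ Icc (0:ℝ) t, P ε u := by
    intro ε hε hεe
    have hε1 : ε ≤ 1 := le_trans hεe (Real.exp_le_one_iff.mpr
      (neg_nonpos.mpr (mul_nonneg hΛpos.le ht0)))
    by_contra hbad
    obtain ⟨u₀, hu₀, hPu₀⟩ : ∃ u, u ∈ Icc (0:ℝ) t ∧ ¬ P ε u := by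
      by_contra h2
      push_neg at h2
      exact hbad fun u hu => h2 u hu
    obtain ⟨S, hSmem⟩ : ∃ S : Set ℝ, ∀ x, x ∈ S ↔ (x ∈ Icc (0:ℝ) t ∧ ¬ P ε x) :=
      ⟨_, fun _ => Iff.rfl⟩
    have hSne : S.Nonempty := ⟨u₀, (hSmem u₀).mpr ⟨hu₀, hPu₀⟩⟩
    have hSbd : BddBelow S := ⟨0, fun x hx => ((hSmem x).mp hx).1.1⟩
    obtain ⟨τ, hτdef⟩ : ∃ x : ℝ, x = sInf S := ⟨_, rfl⟩
    have hτu₀ : τ ≤ u₀ := by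
      rw [hτdef]; exact csInf_le hSbd ((hSmem u₀).mpr ⟨hu₀, hPu₀⟩)
    have hτ0 : 0 ≤ τ := by
      rw [hτdef]; exact le_csInf hSne fun x hx => ((hSmem x).mp hx).1.1
    have hτt : τ ≤ t := le_trans hτu₀ hu₀.2
    have hbefore : ∀ v, 0 ≤ v → v < τ →
        (φ v < 1 + ε * Real.exp (Λ * v) ∧
         δ₀ * (1 - ε) * Real.exp (-(Λ * v)) < φ v ∧
         -(ε * Real.exp (Λ * v)) < y v ∧
         y v < M' + ε * Real.exp (Λ * v) ∧
         -(ε * Real.exp (Λ * v)) < s v ∧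
         s v < 1 + ε * Real.exp (Λ * v)) := by
      intro v hv0 hvτ
      rw [← hPdef]
      by_contra hPv
      have : τ ≤ v := by
        rw [hτdef]
        exact csInf_le hSbd ((hSmem v).mpr ⟨⟨hv0, le_trans hvτ.le hτt⟩, hPv⟩)
      linarith
    have hP0 : P ε 0 := by
      rw [hPdef]
      simp only [mul_zero, neg_zero, Real.exp_zero, mul_one]
      have hd : δ₀ * (1 - ε) = δ₀ - δ₀ * ε := by ring
      refine ⟨by linarith, by linarith [mul_pos hδ₀ hε, hd], by linarith,
        by linarith, by linarith, by linarith⟩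
    have hτS : ¬ P ε τ := by
      intro hPτ
      have hτmem : τ ∈ Ici (0:ℝ) := hτ0
      have hφc : ContinuousWithinAt φ (Ici 0) τ := (hφ τ hτmem).continuousWithinAt
      have hyc : ContinuousWithinAt y (Ici 0) τ := (hy τ hτmem).continuousWithinAt
      have hsc : ContinuousWithinAt s (Ici 0) τ := (hs τ hτmem).continuousWithinAt
      have hb1 : ContinuousWithinAt (fun v => 1 + ε * Real.exp (Λ * v)) (Ici 0) τ :=
        (by fun_prop : Continuous fun v => 1 + ε * Real.exp (Λ * v)).continuousWithinAt
      have hb2 : ContinuousWithinAt (fun v => δ₀ * (1 - ε) * Real.exp (-(Λ * v))) (Ici 0) τ :=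
        (by fun_prop : Continuous fun v => δ₀ * (1 - ε) * Real.exp (-(Λ * v))).continuousWithinAt
      have hb3 : ContinuousWithinAt (fun v => -(ε * Real.exp (Λ * v))) (Ici 0) τ :=
        (by fun_prop : Continuous fun v => -(ε * Real.exp (Λ * v))).continuousWithinAt
      have hb4 : ContinuousWithinAt (fun v => M' + ε * Real.exp (Λ * v)) (Ici 0) τ :=
        (by fun_prop : Continuous fun v => M' + ε * Real.exp (Λ * v)).continuousWithinAt
      rw [hPdef] at hPτ
      obtain ⟨q1, q2, q3, q4, q5, q6⟩ := hPτ
      have hev : ∀ᶠ v in 𝓝[Ici (0:ℝ)] τ, P ε v := by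
        have e1 := ev_lt hφc hb1 q1
        have e2 := ev_lt hb2 hφc q2
        have e3 := ev_lt hb3 hyc q3
        have e4 := ev_lt hyc hb4 q4
        have e5 := ev_lt hb3 hsc q5
        have e6 := ev_lt hsc hb1 q6
        filter_upwards [e1, e2, e3, e4, e5, e6] with v v1 v2 v3 v4 v5 v6
        rw [hPdef]
        exact ⟨v1, v2, v3, v4, v5, v6⟩
      rw [eventually_nhdsWithin_iff, Metric.eventually_nhds_iff] at hev
      obtain ⟨δ, hδ, hev⟩ := hev
      obtain ⟨v, hvS, hvδ⟩ := exists_lt_of_csInf_lt hSne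
        (show sInf S < τ + δ by rw [← hτdef]; linarith)
      have hτv : τ ≤ v := by rw [hτdef]; exact csInf_le hSbd hvS
      have hdist : dist v τ < δ := by
        rw [Real.dist_eq, abs_of_nonneg (by linarith)]
        linarith
      exact ((hSmem v).mp hvS).2 (hev hdist ((hSmem v).mp hvS).1.1)
    have hτpos : 0 < τ := lt_of_le_of_ne hτ0 (fun h => hτS (h ▸ hP0))
    have hIci : Ici (0:ℝ) ∈ 𝓝 τ := Ici_mem_nhds hτpos
    have hEd : HasDerivAt (fun v => ε * Real.exp (Λ * v)) (ε * Real.exp (Λ * τ) * Λ) τ := by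
      have d0 : HasDerivAt (fun v : ℝ => Λ * v) Λ τ := by
        simpa using (hasDerivAt_id τ).const_mul Λ
      have h := (d0.exp).const_mul ε
      rw [mul_assoc]; exact h
    have hφd : HasDerivAt φ
        (-((1 - s τ) * μb * φ τ * y τ) - (1 - s τ) * μs * φ τ * c τ) τ :=
      (hφ τ hτ0).hasDerivAt hIci
    have hyd : HasDerivAt y
        (κb * (φ τ / (1 + φ τ)) * (1 - φ τ) - ((1 - s τ) * μb * φ τ + βb) * y τ) τ :=
      (hy τ hτ0).hasDerivAt hIci
    have hsd : HasDerivAt s (-(δs * y τ * s τ)) τ := (hs τ hτ0).hasDerivAt hIci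
    have hφca : ContinuousAt φ τ := hφd.continuousAt
    have hyca : ContinuousAt y τ := hyd.continuousAt
    have hsca : ContinuousAt s τ := hsd.continuousAt
    have cA : φ τ ≤ 1 + ε * Real.exp (Λ * τ) := by
      have hcont : ContinuousAt (fun v => 1 + ε * Real.exp (Λ * v) - φ v) τ :=
        ContinuousAt.sub (by fun_prop) hφca
      have h0 := left_nonneg hτpos hcont (fun u h0u huτ => by
        have h := (hbefore u h0u huτ).1
        show (0:ℝ) ≤ 1 + ε * Real.exp (Λ * u) - φ u
        linarith)
      linarith [show (0:ℝ) ≤ 1 + ε * Real.exp (Λ * τ) - φ τ from h0]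
    have cB : δ₀ * (1 - ε) * Real.exp (-(Λ * τ)) ≤ φ τ := by
      have hcont : ContinuousAt (fun v => φ v - δ₀ * (1 - ε) * Real.exp (-(Λ * v))) τ :=
        hφca.sub (by fun_prop)
      have h0 := left_nonneg hτpos hcont (fun u h0u huτ => by
        have h := (hbefore u h0u huτ).2.1
        show (0:ℝ) ≤ φ u - δ₀ * (1 - ε) * Real.exp (-(Λ * u))
        linarith)
      linarith [show (0:ℝ) ≤ φ τ - δ₀ * (1 - ε) * Real.exp (-(Λ * τ)) from h0]
    have cC : -(ε * Real.exp (Λ * τ)) ≤ y τ := by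
      have hcont : ContinuousAt (fun v => y v + ε * Real.exp (Λ * v)) τ :=
        hyca.add (by fun_prop)
      have h0 := left_nonneg hτpos hcont (fun u h0u huτ => by
        have h := (hbefore u h0u huτ).2.2.1
        show (0:ℝ) ≤ y u + ε * Real.exp (Λ * u)
        linarith)
      linarith [show (0:ℝ) ≤ y τ + ε * Real.exp (Λ * τ) from h0]
    have cD : y τ ≤ M' + ε * Real.exp (Λ * τ) := by
      have hcont : ContinuousAt (fun v => M' + ε * Real.exp (Λ * v) - y v) τ :=
        ContinuousAt.sub (by fun_prop) hyca
      have h0 := left_nonneg hτpos hcont (fun u h0u huτ => by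
        have h := (hbefore u h0u huτ).2.2.2.1
        show (0:ℝ) ≤ M' + ε * Real.exp (Λ * u) - y u
        linarith)
      linarith [show (0:ℝ) ≤ M' + ε * Real.exp (Λ * τ) - y τ from h0]
    have cE : -(ε * Real.exp (Λ * τ)) ≤ s τ := by
      have hcont : ContinuousAt (fun v => s v + ε * Real.exp (Λ * v)) τ :=
        hsca.add (by fun_prop)
      have h0 := left_nonneg hτpos hcont (fun u h0u huτ => by
        have h := (hbefore u h0u huτ).2.2.2.2.1
        show (0:ℝ) ≤ s u + ε * Real.exp (Λ * u)
        linarith)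
      linarith [show (0:ℝ) ≤ s τ + ε * Real.exp (Λ * τ) from h0]
    have cF : s τ ≤ 1 + ε * Real.exp (Λ * τ) := by
      have hcont : ContinuousAt (fun v => 1 + ε * Real.exp (Λ * v) - s v) τ :=
        ContinuousAt.sub (by fun_prop) hsca
      have h0 := left_nonneg hτpos hcont (fun u h0u huτ => by
        have h := (hbefore u h0u huτ).2.2.2.2.2
        show (0:ℝ) ≤ 1 + ε * Real.exp (Λ * u) - s u
        linarith)
      linarith [show (0:ℝ) ≤ 1 + ε * Real.exp (Λ * τ) - s τ from h0]
    obtain ⟨e, hedef⟩ : ∃ x : ℝ, x = ε * Real.exp (Λ * τ) := ⟨_, rfl⟩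
    have he0 : 0 < e := by rw [hedef]; positivity
    have he1 : e ≤ 1 := by
      rw [hedef]
      have h1 : ε * Real.exp (Λ * τ) ≤ Real.exp (-(Λ * t)) * Real.exp (Λ * τ) :=
        mul_le_mul_of_nonneg_right hεe (Real.exp_pos _).le
      have h2 : Real.exp (-(Λ * t)) * Real.exp (Λ * τ) = Real.exp (Λ * τ - Λ * t) := by
        rw [← Real.exp_add]; ring_nf
      have h3 : Real.exp (Λ * τ - Λ * t) ≤ 1 := Real.exp_le_one_iff.mpr
        (sub_nonpos.mpr (mul_le_mul_of_nonneg_left hτt hΛpos.le))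
      linarith
    rw [← hedef] at cA cC cD cE cF
    have hεlt1 : ε < 1 := by
      have hlt : Real.exp (-(Λ * t)) < 1 := Real.exp_lt_one_iff.mpr
        (neg_lt_zero.mpr (mul_pos hΛpos (lt_of_lt_of_le hτpos hτt)))
      linarith
    have hφpos : 0 < φ τ :=
      lt_of_lt_of_le (mul_pos (mul_pos hδ₀ (by linarith)) (Real.exp_pos _)) cB
    have hφ2 : φ τ ≤ 2 := by linarith
    have hcτ0 : 0 ≤ c τ := hc_nonneg τ hτ0
    have hcτC : c τ ≤ C := hCb τ ⟨hτ0, hτt⟩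
    obtain ⟨q, hqdef⟩ : ∃ x : ℝ, x = φ τ / (1 + φ τ) := ⟨_, rfl⟩
    have hq0 : 0 ≤ q := by rw [hqdef]; exact div_nonneg hφpos.le (by linarith)
    have hq1 : q ≤ 1 := by
      rw [hqdef, div_le_one (by linarith)]
      linarith
    rw [← hqdef] at hyd
    by_cases h1 : φ τ = 1 + e
    · have hgd := (hEd.const_add 1).sub hφd
      rw [← hedef] at hgd
      refine deriv_pos_exit hτpos hgd ?_ ?_ ?_
      · exact contact_phi_upper μb μs M' C Λ e (1 - s τ) (y τ) (c τ) (φ τ)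
          hμb hμs hM0 hCnn he0 he1 (by linarith) (by linarith) cC cD
          hcτ0 hcτC hφpos hφ2 gap1
      · intro v h0v hvτ
        have h := (hbefore v h0v hvτ).1
        show (0:ℝ) < 1 + ε * Real.exp (Λ * v) - φ v
        linarith
      · show 1 + ε * Real.exp (Λ * τ) - φ τ = 0
        rw [h1, hedef]
        ring
    · by_cases h2 : φ τ = δ₀ * (1 - ε) * Real.exp (-(Λ * τ))
      · have hBder : HasDerivAt (fun v => δ₀ * (1 - ε) * Real.exp (-(Λ * v)))
            (-(δ₀ * (1 - ε) * Real.exp (-(Λ * τ)) * Λ)) τ := by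
          have d1 : HasDerivAt (fun v : ℝ => -(Λ * v)) (-Λ) τ := by
            simpa [Pi.neg_def] using ((hasDerivAt_id τ).const_mul Λ).neg
          have h := (d1.exp).const_mul (δ₀ * (1 - ε))
          rw [show -(δ₀ * (1 - ε) * Real.exp (-(Λ * τ)) * Λ) = δ₀ * (1 - ε) * (Real.exp (-(Λ * τ)) * -Λ) by ring]
          exact h
        have hgd := hφd.sub hBder
        refine deriv_pos_exit hτpos hgd ?_ ?_ ?_
        · rw [← h2]
          exact contact_phi_lower μb μs M' C Λ e (1 - s τ) (y τ) (c τ) (φ τ)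
            hμb hμs hM0 hCnn he0 he1 (by linarith) (by linarith) cC cD
            hcτ0 hcτC hφpos gap2
        · intro v h0v hvτ
          have h := (hbefore v h0v hvτ).2.1
          show (0:ℝ) < φ v - δ₀ * (1 - ε) * Real.exp (-(Λ * v))
          linarith
        · show φ τ - δ₀ * (1 - ε) * Real.exp (-(Λ * τ)) = 0
          rw [h2]
          ring
      · by_cases h3 : y τ = -e
        · have hgd := hyd.add hEd
          rw [← hedef] at hgd
          refine deriv_pos_exit hτpos hgd ?_ ?_ ?_
          · rw [h3]
            exact contact_y_lower κb μb βb Λ q (φ τ) (1 - s τ) e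
              hκb hμb hβb he0 he1 hq0 hq1 hφpos hφ2 cA
              (by linarith) (by linarith) gap3
          · intro v h0v hvτ
            have h := (hbefore v h0v hvτ).2.2.1
            show (0:ℝ) < y v + ε * Real.exp (Λ * v)
            linarith
          · show y τ + ε * Real.exp (Λ * τ) = 0
            rw [h3, hedef]
            ring
        · by_cases h4 : y τ = M' + e
          · have hgd := (hEd.const_add M').sub hyd
            rw [← hedef] at hgd
            refine deriv_pos_exit hτpos hgd ?_ ?_ ?_
            · rw [h4]
              exact contact_y_upper κb μb βb M' Λ q (φ τ) (1 - s τ) e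
                hκb hμb hβb hM0 he0 he1 hq0 hq1 hφpos hφ2
                (by linarith) (by linarith) hM'κ gap4
            · intro v h0v hvτ
              have h := (hbefore v h0v hvτ).2.2.2.1
              show (0:ℝ) < M' + ε * Real.exp (Λ * v) - y v
              linarith
            · show M' + ε * Real.exp (Λ * τ) - y τ = 0
              rw [h4, hedef]
              ring
          · by_cases h5 : s τ = -e
            · have hgd := hsd.add hEd
              rw [← hedef] at hgd
              refine deriv_pos_exit hτpos hgd ?_ ?_ ?_
              · rw [h5]
                exact contact_s_lower δs Λ (y τ) e hδs he0 he1 cC gap5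
              · intro v h0v hvτ
                have h := (hbefore v h0v hvτ).2.2.2.2.1
                show (0:ℝ) < s v + ε * Real.exp (Λ * v)
                linarith
              · show s τ + ε * Real.exp (Λ * τ) = 0
                rw [h5, hedef]
                ring
            · by_cases h6 : s τ = 1 + e
              · have hgd := (hEd.const_add 1).sub hsd
                rw [← hedef] at hgd
                refine deriv_pos_exit hτpos hgd ?_ ?_ ?_
                · rw [h6]
                  exact contact_s_upper δs Λ (y τ) e hδs he0 he1 cC gap6
                · intro v h0v hvτ
                  have h := (hbefore v h0v hvτ).2.2.2.2.2
                  show (0:ℝ) < 1 + ε * Real.exp (Λ * v) - s v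
                  linarith
                · show 1 + ε * Real.exp (Λ * τ) - s τ = 0
                  rw [h6, hedef]
                  ring
              · refine hτS ?_
                rw [hPdef, ← hedef]
                exact ⟨lt_of_le_of_ne cA h1,
                  lt_of_le_of_ne cB (fun hh => h2 hh.symm),
                  lt_of_le_of_ne cC (fun hh => h3 hh.symm),
                  lt_of_le_of_ne cD h4,
                  lt_of_le_of_ne cE (fun hh => h5 hh.symm),
                  lt_of_le_of_ne cF h6⟩
  have htt : t ∈ Icc (0:ℝ) t := ⟨ht0, le_refl t⟩
  have hexp : (0:ℝ) < Real.exp (Λ * t) := Real.exp_pos _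
  have hε₀pos : 0 < Real.exp (-(Λ * t)) := Real.exp_pos _
  have key' : ∀ ε : ℝ, 0 < ε → ε ≤ Real.exp (-(Λ * t)) →
      φ t < 1 + ε * Real.exp (Λ * t) ∧
      δ₀ * (1 - ε) * Real.exp (-(Λ * t)) < φ t ∧
      -(ε * Real.exp (Λ * t)) < y t ∧
      y t < M' + ε * Real.exp (Λ * t) ∧
      -(ε * Real.exp (Λ * t)) < s t ∧
      s t < 1 + ε * Real.exp (Λ * t) := by
    intro ε hε hεe
    have h := key ε hε hεe t htt
    rwa [hPdef] at h
  have hε₀le1 : Real.exp (-(Λ * t)) ≤ 1 :=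
    Real.exp_le_one_iff.mpr (neg_nonpos.mpr (mul_nonneg hΛpos.le ht0))
  have b1 : φ t ≤ 1 :=
    lim_le hexp hε₀pos (fun ε a b => (key' ε a b).1)
  have b2 : 0 < φ t := by
    have h := (key' _ hε₀pos le_rfl).2.1
    have hbar : 0 ≤ δ₀ * (1 - Real.exp (-(Λ * t))) * Real.exp (-(Λ * t)) :=
      mul_nonneg (mul_nonneg hδ₀.le (by linarith)) (Real.exp_pos _).le
    linarith
  have b3 : 0 ≤ y t := by
    have h : -y t ≤ 0 :=
      lim_le hexp hε₀pos (fun ε a b => by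
        have := (key' ε a b).2.2.1
        linarith)
    linarith
  have b4 : y t ≤ max Mb0 (κb / βb) := by
    rw [← hM'def]
    exact lim_le hexp hε₀pos (fun ε a b => (key' ε a b).2.2.2.1)
  have b5 : 0 ≤ s t := by
    have h : -s t ≤ 0 :=
      lim_le hexp hε₀pos (fun ε a b => by
        have := (key' ε a b).2.2.2.2.1
        linarith)
    linarith
  have b6 : s t ≤ 1 :=
    lim_le hexp hε₀pos (fun ε a b => (key' ε a b).2.2.2.2.2)
  exact ⟨⟨b2, b1⟩, ⟨b3, b4⟩, ⟨b5, b6⟩⟩
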